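/- arXiv:1011.4583 — 2 statements merged into one kernel-verified Lean document; each statement's English description precedes it below -/
import Mathlib

section
/- Let w ∈ 𝔚_p with |(w⁻¹Δ) \ Φ_p| = 1. Then either Φ⁺ \ Φ_p⁺ ⊆ w⁻¹Φ⁺ or Φ⁺ \ Φ_p⁺ ⊆ w⁻¹Φ⁻; that is, Φ⁺ \ Φ_p⁺ equals either (Φ⁺ \ Φ_p⁺) ∩ w⁻¹Φ⁺ or (Φ⁺ \ Φ_p⁺) ∩ w⁻¹Φ⁻. -/
open scoped Classical RealInnerProductSpace

noncomputable section

namespace Weng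

/-- The completed Riemann zeta function `ζ̂(s) = π^(-s/2) Γ(s/2) ζ(s)`. -/
def zetaHat (s : ℂ) : ℂ := completedRiemannZeta s

/-- The entire Riemann xi function `ξ(s) = s (s-1) ζ̂(s)`
(written in terms of the entire function `Λ₀` so that the removable singularities
at `s = 0, 1` are correctly filled in). -/
def xi (s : ℂ) : ℂ := s * (s - 1) * completedRiemannZeta₀ s + 1

variable (V : Type) [NormedAddCommGroup V] [InnerProductSpace ℝ V] [FiniteDimensional ℝ V]

/-- The coroot `α^∨ = 2 α / ⟨α, α⟩` of a vector `α`. -/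
def coroot (α : V) : V := (2 / ⟪α, α⟫) • α

/-- Reflection in the hyperplane orthogonal to `α`. -/
def srefl (α : V) : V ≃ₗᵢ[ℝ] V := Submodule.reflection (ℝ ∙ α)ᗮ

variable {V}

/-- A reduced irreducible crystallographic root system `Φ` in a finite dimensional real
inner product space `V`, together with a fundamental system `Δ = {α_1, …, α_r}` (indexed by
`Fin r`), the corresponding positive system `Φ⁺` (`Pos`), and the fundamental weights
`λ_1, …, λ_r` (`fw`). -/
structure RootSystemData (V : Type) [NormedAddCommGroup V] [InnerProductSpace ℝ V]
    [FiniteDimensional ℝ V] : Type where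
  /-- the rank -/
  r : ℕ
  /-- the root system -/
  Φ : Finset V
  /-- the simple roots -/
  Δ : Fin r → V
  /-- the positive roots -/
  Pos : Finset V
  /-- the fundamental weights -/
  fw : Fin r → V
  hΔinj : Function.Injective Δ
  hΔPos : ∀ j, Δ j ∈ Pos
  hspan : Submodule.span ℝ (Φ : Set V) = ⊤
  hzero : (0 : V) ∉ Φ
  hreduced : ∀ α ∈ Φ, ∀ t : ℝ, t • α ∈ (Φ : Set V) → t = 1 ∨ t = -1
  hcrys : ∀ α ∈ Φ, ∀ β ∈ Φ, ∃ n : ℤ, ⟪β, coroot V α⟫ = (n : ℝ)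
  hrefl : ∀ α ∈ Φ, ∀ β ∈ Φ, β - ⟪β, coroot V α⟫ • α ∈ Φ
  hirred : ∀ S T : Finset V, S ∪ T = Φ → (∀ a ∈ S, ∀ b ∈ T, ⟪a, b⟫ = 0) →
    S = ∅ ∨ T = ∅
  hPosSub : Pos ⊆ Φ
  hNegSub : ∀ α ∈ Pos, -α ∈ Φ
  hPosDec : ∀ α ∈ Φ, (α ∈ Pos ∧ -α ∉ Pos) ∨ (α ∉ Pos ∧ -α ∈ Pos)
  hPosComb : ∀ α ∈ Pos, ∃ c : Fin r → ℕ, α = ∑ j, (c j : ℝ) • Δ j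
  hfw : ∀ i j, ⟪fw i, coroot V (Δ j)⟫ = if i = j then 1 else 0

namespace RootSystemData

variable {V : Type} [NormedAddCommGroup V] [InnerProductSpace ℝ V] [FiniteDimensional ℝ V]
variable (d : RootSystemData V)

/-- The set `Φ⁻ = -Φ⁺` of negative roots, as a `Finset`. -/
def NegS : Finset V := d.Pos.image (fun α => -α)

/-- The Weyl vector `ρ = (1/2) Σ_{α ∈ Φ⁺} α`. -/
def rho : V := (2⁻¹ : ℝ) • ∑ α ∈ d.Pos, α

/-- The height `ht α^∨ = ⟨ρ, α^∨⟩` of the coroot of `α`. -/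
def ht (α : V) : ℝ := ⟪d.rho, coroot V α⟫

/-- The Weyl group `W`, as the subgroup of the group of linear isometries of `V`
generated by the reflections in the simple roots. -/
def W : Subgroup (V ≃ₗᵢ[ℝ] V) := Subgroup.closure (Set.range fun j => srefl V (d.Δ j))

/-- The subset `Δ_p = Δ \ {α_p}` of the simple roots, as a set of vectors. -/
def DeltaP (p : Fin d.r) : Set V := d.Δ '' {j | j ≠ p}

/-- `Δ_p` as a `Finset`. -/
def DeltaPFin (p : Fin d.r) : Finset V := (Finset.univ.filter (fun j => j ≠ p)).image d.Δ

/-- The subgroup `W_p` of `W` generated by the reflections in the simple roots in `Δ_p`. -/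
def Wp (p : Fin d.r) : Subgroup (V ≃ₗᵢ[ℝ] V) :=
  Subgroup.closure ((fun j => srefl V (d.Δ j)) '' {j | j ≠ p})

/-- The root subsystem `Φ_p = Φ ∩ span_ℝ(Δ_p)`. -/
def PhiP (p : Fin d.r) : Finset V :=
  d.Φ.filter (fun α => α ∈ Submodule.span ℝ (d.DeltaP p))

/-- The positive system `Φ_p⁺ = Φ⁺ ∩ Φ_p` of `Φ_p`. -/
def PhiPpos (p : Fin d.r) : Finset V := d.Pos ∩ d.PhiP p

/-- `ρ_p = (1/2) Σ_{α ∈ Φ_p⁺} α`. -/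
def rhoP (p : Fin d.r) : V := (2⁻¹ : ℝ) • ∑ α ∈ d.PhiPpos p, α

/-- The constant `c_p = 2 ⟨λ_p - ρ_p, α_p^∨⟩`. -/
def cp (p : Fin d.r) : ℝ := 2 * ⟪d.fw p - d.rhoP p, coroot V (d.Δ p)⟫

/-- The set `𝔚_p = {w ∈ W : Δ_p ⊆ w⁻¹(Δ ∪ Φ⁻)}`. -/
def frakW (p : Fin d.r) : Set (V ≃ₗᵢ[ℝ] V) :=
  {w | w ∈ d.W ∧ ∀ j : Fin d.r, j ≠ p →
    (w (d.Δ j) ∈ Set.range d.Δ ∨ w (d.Δ j) ∈ d.NegS)}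

/-- `l_p(w) = |(Φ⁺ \ Φ_p⁺) ∩ w⁻¹ Φ⁻|`. -/
def lp (p : Fin d.r) (w : V ≃ₗᵢ[ℝ] V) : ℕ :=
  ((d.Pos \ d.PhiPpos p).filter (fun α => w α ∈ d.NegS)).card

/-- `N_{p,w}(k,h) = #{α ∈ w⁻¹Φ⁻ : ⟨λ_p, α^∨⟩ = k, ht α^∨ = h}`. -/
def Npw (p : Fin d.r) (w : V ≃ₗᵢ[ℝ] V) (k h : ℝ) : ℕ :=
  (d.Φ.filter (fun α => w α ∈ d.NegS ∧ ⟪d.fw p, coroot V α⟫ = k ∧ d.ht α = h)).card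

/-- `N_p(k,h) = #{α ∈ Φ : ⟨λ_p, α^∨⟩ = k, ht α^∨ = h}`. -/
def Np (p : Fin d.r) (k h : ℝ) : ℕ :=
  (d.Φ.filter (fun α => ⟪d.fw p, coroot V α⟫ = k ∧ d.ht α = h)).card

/-- `M_p(k,h) = max_{w ∈ 𝔚_p} (N_{p,w}(k,h-1) - N_{p,w}(k,h))`. -/
def Mp (p : Fin d.r) (k h : ℝ) : ℤ :=
  sSup {n : ℤ | ∃ w ∈ d.frakW p, n = (d.Npw p w k (h - 1) : ℤ) - (d.Npw p w k h : ℤ)}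

/-- The period `ω_p(s)`. -/
def omegaP (p : Fin d.r) (s : ℂ) : ℂ :=
  ∑ᶠ w ∈ d.frakW p,
    (∏ α ∈ d.Φ.filter (fun α => w α ∈ Set.range d.Δ ∧ α ∉ d.DeltaP p),
        ((⟪d.fw p, coroot V α⟫ : ℂ) * s + (d.ht α : ℂ) - 1)⁻¹) *
    (∏ α ∈ d.Pos.filter (fun α => w α ∈ d.NegS ∧ α ∉ d.DeltaP p),
        zetaHat ((⟪d.fw p, coroot V α⟫ : ℂ) * s + (d.ht α : ℂ))) *
    (∏ α ∈ d.Φ.filter (fun α => -α ∈ d.Pos ∧ w (-α) ∈ d.NegS),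
        (zetaHat ((⟪d.fw p, coroot V α⟫ : ℂ) * s + (d.ht α : ℂ)))⁻¹)

/-- The Weng zeta function
`ζ̂_p(s) = ω_p(s) ∏_{k ≥ 0} ∏_{h ≥ 2} ζ̂(k s + h)^{M_p(k,h)}`
(the product is finite: `M_p(k,h) = 0` outside of the displayed finite range). -/
def zetaWeng (p : Fin d.r) (s : ℂ) : ℂ :=
  d.omegaP p s *
    ∏ k ∈ Finset.range (d.Φ.card + 2), ∏ h ∈ Finset.range (d.Φ.card + 2),
      (if 2 ≤ h then zetaHat ((k : ℂ) * s + (h : ℂ)) ^ (d.Mp p (k : ℝ) (h : ℝ)) else 1)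


/-- `δ_{α,w} = 1` if `α ∈ w⁻¹Φ⁺`, and `δ_{α,w} = 0` if `α ∈ w⁻¹Φ⁻`. -/
def deltaIdx (w : V ≃ₗᵢ[ℝ] V) (α : V) : ℕ := if w α ∈ d.Pos then 1 else 0

/-- `X̃_{p,w}(s) = ξ(2)^{|Δ_p ∩ w⁻¹Φ⁺|} ∏_{α ∈ Φ⁺ \ Δ_p} ξ(⟨λ_p,α^∨⟩ s + ht α^∨ + δ_{α,w})`. -/
def Xtilde (p : Fin d.r) (w : V ≃ₗᵢ[ℝ] V) (s : ℂ) : ℂ :=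
  xi 2 ^ ((d.DeltaPFin p).filter (fun α => w α ∈ d.Pos)).card *
  ∏ α ∈ d.Pos.filter (fun α => α ∉ d.DeltaP p),
    xi ((⟪d.fw p, coroot V α⟫ : ℂ) * s + (d.ht α : ℂ) + (d.deltaIdx w α : ℂ))

/-- The polynomial factor attached to a single `v ∈ 𝔚_p` appearing in `Q̃_{p,w}` and `Q_p`. -/
def Qfactor (p : Fin d.r) (v : V ≃ₗᵢ[ℝ] V) (s : ℂ) : ℂ :=
  (2 : ℂ) ^ ((d.DeltaPFin p).filter (fun α => v α ∈ d.Pos)).card *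
  (∏ α ∈ d.Φ.filter (fun α => v α ∈ Set.range d.Δ ∧ α ∉ d.DeltaP p),
      ((⟪d.fw p, coroot V α⟫ : ℂ) * s + (d.ht α : ℂ) - 1)) *
  ∏ α ∈ d.Pos.filter (fun α => α ∉ d.DeltaP p),
    ((⟪d.fw p, coroot V α⟫ : ℂ) * s + (d.ht α : ℂ) + (d.deltaIdx v α : ℂ)) *
      ((⟪d.fw p, coroot V α⟫ : ℂ) * s + (d.ht α : ℂ) + (d.deltaIdx v α : ℂ) - 1)

/-- The polynomial `Q̃_{p,w}(s)` (product of the `Qfactor`s over all `v ∈ 𝔚_p`, `v ≠ w`). -/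
def Qtilde (p : Fin d.r) (w : V ≃ₗᵢ[ℝ] V) (s : ℂ) : ℂ :=
  ∏ᶠ v ∈ d.frakW p \ {w}, d.Qfactor p v s

/-- The polynomial `Q_p(s)` (product of the `Qfactor`s over all `v ∈ 𝔚_p`). -/
def Qp (p : Fin d.r) (s : ℂ) : ℂ := ∏ᶠ v ∈ d.frakW p, d.Qfactor p v s

/-- The entire function `X_p(s) = Σ_{w ∈ 𝔚_p} Q̃_{p,w}(s) X̃_{p,w}(s)`. -/
def Xp (p : Fin d.r) (s : ℂ) : ℂ := ∑ᶠ w ∈ d.frakW p, d.Qtilde p w s * d.Xtilde p w s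

/-- `X_{p,w}(s) = ∏_{α ∈ Φ⁺ \ Φ_p⁺} ξ(⟨λ_p,α^∨⟩ s + ht α^∨ + δ_{α,w})`. -/
def Xpw (p : Fin d.r) (w : V ≃ₗᵢ[ℝ] V) (s : ℂ) : ℂ :=
  ∏ α ∈ d.Pos \ d.PhiPpos p,
    xi ((⟪d.fw p, coroot V α⟫ : ℂ) * s + (d.ht α : ℂ) + (d.deltaIdx w α : ℂ))

/-- The constant `C_{p,w} = ξ(2)^{|Δ_p ∩ w⁻¹Φ⁺|} ∏_{α ∈ Φ_p⁺ \ Δ_p} ξ(ht α^∨ + δ_{α,w})`. -/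
def Cpw (p : Fin d.r) (w : V ≃ₗᵢ[ℝ] V) : ℂ :=
  xi 2 ^ ((d.DeltaPFin p).filter (fun α => w α ∈ d.Pos)).card *
  ∏ α ∈ (d.PhiPpos p).filter (fun α => α ∉ d.DeltaP p),
    xi ((d.ht α : ℂ) + (d.deltaIdx w α : ℂ))

/-- `Q_{p,w}(s) = C_{p,w} Q̃_{p,w}(s)`. -/
def Qpw (p : Fin d.r) (w : V ≃ₗᵢ[ℝ] V) (s : ℂ) : ℂ := d.Cpw p w * d.Qtilde p w s

/-- `𝔚_p⁺ = {w ∈ 𝔚_p : l_p(w) < |Φ⁺ \ Φ_p⁺| / 2}`. -/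
def frakWplus (p : Fin d.r) : Set (V ≃ₗᵢ[ℝ] V) :=
  {w ∈ d.frakW p | 2 * d.lp p w < (d.Pos \ d.PhiPpos p).card}

/-- `𝔚_p⁰ = {w ∈ 𝔚_p : l_p(w) = |Φ⁺ \ Φ_p⁺| / 2}`. -/
def frakWzero (p : Fin d.r) : Set (V ≃ₗᵢ[ℝ] V) :=
  {w ∈ d.frakW p | 2 * d.lp p w = (d.Pos \ d.PhiPpos p).card}

/-- `𝔚_p‡ = {w ∈ 𝔚_p : l_p(w) = 0}`. -/
def frakWdag (p : Fin d.r) : Set (V ≃ₗᵢ[ℝ] V) :=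
  {w ∈ d.frakW p | d.lp p w = 0}

/-- `E_p(s) = Σ_{w ∈ 𝔚_p⁺} Q_{p,w}(s) X_{p,w}(s) + (1/2) Σ_{w ∈ 𝔚_p⁰} Q_{p,w}(s) X_{p,w}(s)`. -/
def Ep (p : Fin d.r) (s : ℂ) : ℂ :=
  (∑ᶠ w ∈ d.frakWplus p, d.Qpw p w s * d.Xpw p w s) +
    (2 : ℂ)⁻¹ * ∑ᶠ w ∈ d.frakWzero p, d.Qpw p w s * d.Xpw p w s

end RootSystemData

end Weng


section AuxProof

open Weng RootSystemData

variable {V : Type} [NormedAddCommGroup V] [InnerProductSpace ℝ V] [FiniteDimensional ℝ V]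

lemma srefl_apply_ne_zero {a : V} (ha : a ≠ 0) (x : V) :
    srefl V a x = x - ⟪x, coroot V a⟫ • a := by
  have h1 : srefl V a x = -(Submodule.reflection (ℝ ∙ a) x) := Submodule.reflection_orthogonal_apply _ _
  have hnorm : ⟪a, a⟫ = ‖a‖ ^ 2 := real_inner_self_eq_norm_sq a
  have hinner : ⟪x, coroot V a⟫ = (2 / ⟪a, a⟫) * ⟪a, x⟫ := by
    rw [coroot, real_inner_smul_right, real_inner_comm x a]
  rw [h1, Submodule.reflection_singleton_apply]
  simp only [RCLike.ofReal_real_eq_id, id_eq]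
  rw [hinner, hnorm, neg_sub]
  congr 1
  rw [two_nsmul, ← add_smul]
  congr 1
  ring

namespace Weng.RootSystemData

lemma root_ne_zero (d : RootSystemData V) {α : V} (hα : α ∈ d.Φ) : α ≠ 0 := by
  rintro rfl; exact d.hzero hα

lemma simple_mem_Phi (d : RootSystemData V) (j : Fin d.r) : d.Δ j ∈ d.Φ :=
  d.hPosSub (d.hΔPos j)

lemma maps_of_mem_W (d : RootSystemData V) {w : V ≃ₗᵢ[ℝ] V} (hw : w ∈ d.W) :
    ∀ α ∈ d.Φ, w α ∈ d.Φ := by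
  have hinv : ∀ v : V ≃ₗᵢ[ℝ] V, (∀ α ∈ d.Φ, v α ∈ d.Φ) → ∀ α ∈ d.Φ, v⁻¹ α ∈ d.Φ := by
    intro v hv α hα
    have himg : d.Φ.image (fun x => v x) = d.Φ := by
      apply Finset.eq_of_subset_of_card_le
      · intro x hx
        obtain ⟨y, hy, rfl⟩ := Finset.mem_image.mp hx
        exact hv y hy
      · rw [Finset.card_image_of_injective _ v.injective]
    rw [← himg] at hα
    obtain ⟨y, hy, hyx⟩ := Finset.mem_image.mp hα
    have hsymm : v.symm α = y := by rw [← hyx]; exact v.symm_apply_apply y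
    have hco : (v⁻¹ : V ≃ₗᵢ[ℝ] V) α = v.symm α := rfl
    rw [hco, hsymm]; exact hy
  refine Subgroup.closure_induction ?_ ?_ ?_ ?_ hw
  · rintro x ⟨j, rfl⟩ α hα
    have := d.hrefl (d.Δ j) (d.simple_mem_Phi j) α hα
    rwa [srefl_apply_ne_zero (d.root_ne_zero (d.simple_mem_Phi j))]
  · intro α hα; simpa using hα
  · intro x y _ _ hx hy α hα
    exact hx _ (hy _ hα)
  · intro x _ hx
    exact hinv x hx

lemma inner_fw_simple_ne (d : RootSystemData V) (p : Fin d.r) {j : Fin d.r}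
    (hj : j ≠ p) : ⟪d.fw p, d.Δ j⟫ = 0 := by
  have h := d.hfw p j
  rw [if_neg (Ne.symm hj)] at h
  have hne : d.Δ j ≠ 0 := d.root_ne_zero (d.simple_mem_Phi j)
  have hinner : ⟪d.Δ j, d.Δ j⟫ ≠ 0 := by
    simpa [inner_self_eq_zero] using hne
  rw [coroot, real_inner_smul_right] at h
  rcases mul_eq_zero.mp h with h1 | h1
  · exact absurd h1 (by positivity)
  · exact h1

lemma inner_fw_simple_self (d : RootSystemData V) (p : Fin d.r) :
    0 < ⟪d.fw p, d.Δ p⟫ := by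
  have h := d.hfw p p
  rw [if_pos rfl, coroot, real_inner_smul_right] at h
  have hne : d.Δ p ≠ 0 := d.root_ne_zero (d.simple_mem_Phi p)
  have hpos : 0 < ⟪d.Δ p, d.Δ p⟫ := by
    rw [real_inner_self_eq_norm_sq]
    exact pow_pos (norm_pos_iff.mpr hne) 2
  rw [div_mul_eq_mul_div, div_eq_one_iff_eq (ne_of_gt hpos)] at h
  linarith

lemma inner_fw_span (d : RootSystemData V) (p : Fin d.r) {x : V}
    (hx : x ∈ Submodule.span ℝ (d.DeltaP p)) : ⟪d.fw p, x⟫ = 0 := by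
  induction hx using Submodule.span_induction with
  | mem y hy =>
    obtain ⟨j, hj, rfl⟩ := hy
    exact d.inner_fw_simple_ne p hj
  | zero => simp
  | add y z _ _ hy hz => rw [inner_add_right, hy, hz]; ring
  | smul t y _ hy => rw [real_inner_smul_right, hy]; ring

lemma inner_fw_PhiP (d : RootSystemData V) (p : Fin d.r) {α : V}
    (hα : α ∈ d.PhiP p) : ⟪d.fw p, α⟫ = 0 :=
  d.inner_fw_span p (Finset.mem_filter.mp hα).2

lemma inner_fw_pos_of_not_PhiP (d : RootSystemData V) (p : Fin d.r) {β : V}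
    (hβ : β ∈ d.Pos) (hβ2 : β ∉ d.PhiP p) : 0 < ⟪d.fw p, β⟫ := by
  obtain ⟨c, hc⟩ := d.hPosComb β hβ
  have hfβ : ⟪d.fw p, β⟫ = (c p : ℝ) * ⟪d.fw p, d.Δ p⟫ := by
    rw [hc, inner_sum]
    rw [Finset.sum_eq_single p]
    · rw [real_inner_smul_right]
    · intro j _ hj
      rw [real_inner_smul_right, d.inner_fw_simple_ne p hj, mul_zero]
    · intro h; exact absurd (Finset.mem_univ p) h
  have hcp : c p ≠ 0 := by
    intro h0
    apply hβ2
    rw [RootSystemData.PhiP, Finset.mem_filter]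
    refine ⟨d.hPosSub hβ, ?_⟩
    rw [hc]
    apply Submodule.sum_mem
    intro j _
    rcases eq_or_ne j p with rfl | hj
    · rw [h0]; simp
    · exact Submodule.smul_mem _ _ (Submodule.subset_span ⟨j, hj, rfl⟩)
  rw [hfβ]
  have : (0 : ℝ) < (c p : ℝ) := by
    have : 1 ≤ c p := Nat.one_le_iff_ne_zero.mpr hcp
    exact_mod_cast Nat.lt_of_lt_of_le Nat.zero_lt_one this
  exact mul_pos this (d.inner_fw_simple_self p)

end Weng.RootSystemData

end AuxProof

open Weng

/-- If `w ∈ 𝔚_p` and `|(w⁻¹Δ) \ Φ_p| = 1`, then `Φ⁺ \ Φ_p⁺` is contained in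
`w⁻¹Φ⁺` or in `w⁻¹Φ⁻`. -/
theorem weng_dichotomy_for_single_exit
    {V : Type} [NormedAddCommGroup V] [InnerProductSpace ℝ V] [FiniteDimensional ℝ V]
    (d : RootSystemData V) (p : Fin d.r)
    (w : V ≃ₗᵢ[ℝ] V) (hw : w ∈ d.frakW p)
    (hcard : (d.Φ.filter (fun α => w α ∈ Set.range d.Δ ∧ α ∉ d.PhiP p)).card = 1) :
    (∀ α ∈ d.Pos \ d.PhiPpos p, w α ∈ d.Pos) ∨
    (∀ α ∈ d.Pos \ d.PhiPpos p, w α ∈ d.NegS) := by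
  classical
  obtain ⟨γ, hγ⟩ := Finset.card_eq_one.mp hcard
  set t : ℝ := ⟪d.fw p, γ⟫ with ht
  have hW : w ∈ d.W := hw.1
  have hmaps : ∀ α ∈ d.Φ, w α ∈ d.Φ := d.maps_of_mem_W hW
  have hmapsInv : ∀ α ∈ d.Φ, w.symm α ∈ d.Φ := by
    intro α hα
    exact d.maps_of_mem_W (inv_mem hW) α hα
  have hvan : ∀ j : Fin d.r, w.symm (d.Δ j) ≠ γ → ⟪d.fw p, w.symm (d.Δ j)⟫ = 0 := by
    intro j hne
    have h1 : w.symm (d.Δ j) ∈ d.Φ := hmapsInv _ (d.simple_mem_Phi j)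
    by_cases h2 : w.symm (d.Δ j) ∈ d.PhiP p
    · exact d.inner_fw_PhiP p h2
    · exfalso
      apply hne
      have hmem : w.symm (d.Δ j) ∈
          d.Φ.filter (fun α => w α ∈ Set.range d.Δ ∧ α ∉ d.PhiP p) := by
        refine Finset.mem_filter.mpr ⟨h1, ⟨j, ?_⟩, h2⟩
        exact (w.apply_symm_apply (d.Δ j)).symm
      rw [hγ] at hmem
      exact Finset.mem_singleton.mp hmem
  have hdelta : ∀ δ ∈ d.Pos, ∃ m : ℝ, 0 ≤ m ∧ ⟪d.fw p, w.symm δ⟫ = m * t := by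
    intro δ hδ
    obtain ⟨c, hc⟩ := d.hPosComb δ hδ
    refine ⟨∑ j, if w.symm (d.Δ j) = γ then (c j : ℝ) else 0, ?_, ?_⟩
    · apply Finset.sum_nonneg; intro j _
      split
      · positivity
      · exact le_refl 0
    · have h1 : w.symm δ = ∑ j, (c j : ℝ) • w.symm (d.Δ j) := by
        rw [hc]; simp [map_sum, map_smul]
      rw [h1, inner_sum, Finset.sum_mul]
      apply Finset.sum_congr rfl
      intro j _
      rw [real_inner_smul_right]
      by_cases hj : w.symm (d.Δ j) = γ
      · rw [if_pos hj, hj]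
      · rw [if_neg hj, hvan j hj, mul_zero, zero_mul]
  have hsign : ∀ β ∈ d.Pos \ d.PhiPpos p,
      (w β ∈ d.Pos → 0 < t) ∧ (w β ∈ d.NegS → t < 0) := by
    intro β hβ
    obtain ⟨hβP, hβnP⟩ := Finset.mem_sdiff.mp hβ
    have hβΦ : β ∉ d.PhiP p := fun h => hβnP (Finset.mem_inter.mpr ⟨hβP, h⟩)
    have hfβ : 0 < ⟪d.fw p, β⟫ := d.inner_fw_pos_of_not_PhiP p hβP hβΦ
    constructor
    · intro hwβ
      obtain ⟨m, hm0, hm⟩ := hdelta (w β) hwβ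
      rw [w.symm_apply_apply] at hm
      rw [hm] at hfβ
      by_contra hle
      push_neg at hle
      nlinarith
    · intro hwβ
      obtain ⟨a, haP, hae⟩ := Finset.mem_image.mp hwβ
      obtain ⟨m, hm0, hm⟩ := hdelta a haP
      have ha2 : a = -(w β) := by rw [← hae, neg_neg]
      have h2 : w.symm a = -β := by
        rw [ha2, map_neg, w.symm_apply_apply]
      rw [h2, inner_neg_right] at hm
      by_contra hle
      push_neg at hle
      nlinarith
  by_cases hT : 0 < t
  · left
    intro β hβ
    have hβΦ : w β ∈ d.Φ := hmaps β (d.hPosSub (Finset.mem_sdiff.mp hβ).1)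
    rcases d.hPosDec _ hβΦ with ⟨h1, _⟩ | ⟨_, h2⟩
    · exact h1
    · exfalso
      have hneg : w β ∈ d.NegS :=
        Finset.mem_image.mpr ⟨-(w β), h2, neg_neg _⟩
      exact absurd hT (not_lt.mpr (le_of_lt ((hsign β hβ).2 hneg)))
  · right
    intro β hβ
    have hβΦ : w β ∈ d.Φ := hmaps β (d.hPosSub (Finset.mem_sdiff.mp hβ).1)
    rcases d.hPosDec _ hβΦ with ⟨h1, _⟩ | ⟨_, h2⟩
    · exact absurd ((hsign β hβ).1 h1) hT
    · exact Finset.mem_image.mpr ⟨-(w β), h2, neg_neg _⟩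
end
end

section
/- The following two subsets of W coincide: {w ∈ 𝔚_p‡ : |(w⁻¹Δ) \ Φ_p| = 1} = {w ∈ W_p : Δ_p ⊆ w⁻¹(Δ_p ∪ Φ_p⁻)}, where Φ_p⁻ = −Φ_p⁺. -/
open scoped Classical RealInnerProductSpace

noncomputable section

open Weng

namespace WengAux

open Weng Weng.RootSystemData

variable {V : Type} [NormedAddCommGroup V] [InnerProductSpace ℝ V] [FiniteDimensional ℝ V]
variable (d : RootSystemData V)

lemma delta_mem_Phi (j : Fin d.r) : d.Δ j ∈ d.Φ := d.hPosSub (d.hΔPos j)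

lemma delta_ne_zero (j : Fin d.r) : d.Δ j ≠ 0 := fun h => d.hzero (h ▸ delta_mem_Phi d j)

lemma inner_delta_pos (j : Fin d.r) : 0 < ⟪d.Δ j, d.Δ j⟫ := by
  have h : 0 < ‖d.Δ j‖ := norm_pos_iff.2 (delta_ne_zero d j)
  rw [real_inner_self_eq_norm_sq]
  positivity

lemma mem_NegS {α : V} : α ∈ d.NegS ↔ -α ∈ d.Pos := by
  constructor
  · intro h
    obtain ⟨β, hβ, rfl⟩ := Finset.mem_image.1 h
    simpa using hβ
  · intro h
    exact Finset.mem_image.2 ⟨-α, h, by simp⟩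

lemma NegS_subset_Phi {α : V} (h : α ∈ d.NegS) : α ∈ d.Φ := by
  have := d.hNegSub _ ((mem_NegS d).1 h)
  simpa using this

lemma not_mem_NegS_of_Pos {α : V} (hα : α ∈ d.Pos) : α ∉ d.NegS := by
  intro h
  rcases d.hPosDec α (d.hPosSub hα) with ⟨_, h2⟩ | ⟨h1, _⟩
  · exact h2 ((mem_NegS d).1 h)
  · exact h1 hα

lemma pos_or_neg {α : V} (hα : α ∈ d.Φ) : α ∈ d.Pos ∨ α ∈ d.NegS := by
  rcases d.hPosDec α hα with h | h
  · exact Or.inl h.1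
  · exact Or.inr ((mem_NegS d).2 h.2)

lemma inner_fw_delta (k l : Fin d.r) :
    ⟪d.fw k, d.Δ l⟫ = if k = l then ⟪d.Δ l, d.Δ l⟫ / 2 else 0 := by
  have h := d.hfw k l
  rw [coroot, real_inner_smul_right] at h
  have h0 : ⟪d.Δ l, d.Δ l⟫ ≠ 0 := (inner_delta_pos d l).ne'
  split_ifs at h ⊢ with hkl
  · field_simp at h
    linarith
  · field_simp at h
    linarith

lemma inner_coroot (β α : V) : ⟪β, coroot V α⟫ = 2 * ⟪β, α⟫ / ⟪α, α⟫ := by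
  rw [coroot, real_inner_smul_right]
  ring

lemma inner_fw_comb (c : Fin d.r → ℕ) (k : Fin d.r) :
    ⟪d.fw k, ∑ j, (c j : ℝ) • d.Δ j⟫ = (c k : ℝ) * (⟪d.Δ k, d.Δ k⟫ / 2) := by
  rw [inner_sum]
  rw [Finset.sum_eq_single k]
  · rw [real_inner_smul_right, inner_fw_delta]
    simp
  · intro b _ hb
    rw [real_inner_smul_right, inner_fw_delta]
    simp [Ne.symm hb]
  · simp

lemma inner_fw_nonneg {β : V} (hβ : β ∈ d.Pos) (k : Fin d.r) : 0 ≤ ⟪d.fw k, β⟫ := by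
  obtain ⟨c, hc⟩ := d.hPosComb β hβ
  rw [hc, inner_fw_comb]
  have := inner_delta_pos d k
  positivity

lemma mem_Pos_of_inner_fw_pos {β : V} (hβ : β ∈ d.Φ) {k : Fin d.r}
    (h : 0 < ⟪d.fw k, β⟫) : β ∈ d.Pos := by
  rcases pos_or_neg d hβ with hp | hn
  · exact hp
  · have h1 := inner_fw_nonneg d ((mem_NegS d).1 hn) k
    rw [inner_neg_right] at h1
    linarith

lemma not_all_fw_zero {β : V} (hβ : β ∈ d.Pos) (h : ∀ k, ⟪d.fw k, β⟫ = 0) : False := by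
  obtain ⟨c, hc⟩ := d.hPosComb β hβ
  have hc0 : ∀ k, (c k : ℝ) = 0 := by
    intro k
    have := h k
    rw [hc, inner_fw_comb] at this
    have h2 := inner_delta_pos d k
    rcases mul_eq_zero.1 this with h3 | h3
    · exact h3
    · exfalso; rw [div_eq_zero_iff] at h3; rcases h3 with h3 | h3 <;> linarith
  have : β = 0 := by
    rw [hc]
    apply Finset.sum_eq_zero
    intro j _
    rw [hc0 j, zero_smul]
  exact d.hzero (this ▸ d.hPosSub hβ)

lemma delta_mem_DeltaP {p j : Fin d.r} (hj : j ≠ p) : d.Δ j ∈ d.DeltaP p := ⟨j, hj, rfl⟩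

lemma inner_fw_p_of_mem_span (p : Fin d.r) {v : V}
    (hv : v ∈ Submodule.span ℝ (d.DeltaP p)) : ⟪d.fw p, v⟫ = 0 := by
  have hle : Submodule.span ℝ (d.DeltaP p) ≤
      LinearMap.ker ((innerSL ℝ (d.fw p) : V →L[ℝ] ℝ) : V →ₗ[ℝ] ℝ) := by
    rw [Submodule.span_le]
    rintro v ⟨j, hj, rfl⟩
    have : ⟪d.fw p, d.Δ j⟫ = 0 := by
      rw [inner_fw_delta]
      simp [Ne.symm hj]
    simpa [LinearMap.mem_ker] using this
  have := hle hv
  simpa [LinearMap.mem_ker] using this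

lemma mem_span_DeltaP_of_pos (p : Fin d.r) {β : V} (hβ : β ∈ d.Pos)
    (h : ⟪d.fw p, β⟫ = 0) : β ∈ Submodule.span ℝ (d.DeltaP p) := by
  obtain ⟨c, hc⟩ := d.hPosComb β hβ
  have hcp : (c p : ℝ) = 0 := by
    rw [hc, inner_fw_comb] at h
    rcases mul_eq_zero.1 h with h3 | h3
    · exact h3
    · exfalso
      have h2 := inner_delta_pos d p
      rw [div_eq_zero_iff] at h3; rcases h3 with h3 | h3 <;> linarith
  rw [hc]
  apply Submodule.sum_mem
  intro j _
  by_cases hj : j = p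
  · subst hj
    rw [hcp, zero_smul]
    exact Submodule.zero_mem _
  · exact Submodule.smul_mem _ _ (Submodule.subset_span (delta_mem_DeltaP d hj))

lemma mem_span_DeltaP_iff (p : Fin d.r) {β : V} (hβ : β ∈ d.Φ) :
    β ∈ Submodule.span ℝ (d.DeltaP p) ↔ ⟪d.fw p, β⟫ = 0 := by
  constructor
  · exact inner_fw_p_of_mem_span d p
  · intro h
    rcases pos_or_neg d hβ with hp | hn
    · exact mem_span_DeltaP_of_pos d p hp h
    · have : -β ∈ Submodule.span ℝ (d.DeltaP p) := by
        apply mem_span_DeltaP_of_pos d p ((mem_NegS d).1 hn)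
        rw [inner_neg_right, h, neg_zero]
      simpa using Submodule.neg_mem _ this

lemma mem_PhiP (p : Fin d.r) {α : V} :
    α ∈ d.PhiP p ↔ α ∈ d.Φ ∧ α ∈ Submodule.span ℝ (d.DeltaP p) := Finset.mem_filter

lemma mem_PhiPpos (p : Fin d.r) {α : V} :
    α ∈ d.PhiPpos p ↔ α ∈ d.Pos ∧ α ∈ Submodule.span ℝ (d.DeltaP p) := by
  rw [PhiPpos, Finset.mem_inter, mem_PhiP]
  constructor
  · rintro ⟨h1, _, h3⟩; exact ⟨h1, h3⟩
  · rintro ⟨h1, h2⟩; exact ⟨h1, d.hPosSub h1, h2⟩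

end WengAux

namespace WengAux

variable {V : Type} [NormedAddCommGroup V] [InnerProductSpace ℝ V] [FiniteDimensional ℝ V]
variable (d : RootSystemData V)

lemma srefl_apply' (α : V) (hα : α ≠ 0) (β : V) :
    srefl V α β = β - ⟪β, coroot V α⟫ • α := by
  have hαα : ⟪α, α⟫ ≠ 0 := by
    have h : 0 < ‖α‖ := norm_pos_iff.2 hα
    rw [real_inner_self_eq_norm_sq]
    positivity
  set t : ℝ := ⟪β, α⟫ / ⟪α, α⟫ with ht
  have hmem : β - t • α ∈ (ℝ ∙ α)ᗮ := by
    rw [Submodule.mem_orthogonal_singleton_iff_inner_left]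
    rw [inner_sub_left, real_inner_smul_left, ht]
    field_simp
    ring
  have h1 : srefl V α (β - t • α) = β - t • α := Submodule.reflection_mem_subspace_eq_self (K := _) hmem
  have h2 : srefl V α (t • α) = -(t • α) := by
    rw [map_smul]
    rw [show srefl V α α = -α from Submodule.reflection_orthogonalComplement_singleton_eq_neg α]
    rw [smul_neg]
  have h3 : srefl V α β = (β - t • α) - t • α := by
    conv_lhs => rw [show β = (β - t • α) + t • α by abel]
    rw [map_add, h1, h2]
    abel
  rw [h3, inner_coroot]
  rw [show (2 : ℝ) * ⟪β, α⟫ / ⟪α, α⟫ = t + t by rw [ht]; ring]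
  rw [add_smul]
  abel

/-- abbreviation for the simple reflections -/
def sfun (j : Fin d.r) : V ≃ₗᵢ[ℝ] V := srefl V (d.Δ j)

lemma sfun_apply (j : Fin d.r) (β : V) :
    sfun d j β = β - ⟪β, coroot V (d.Δ j)⟫ • d.Δ j :=
  srefl_apply' (d.Δ j) (delta_ne_zero d j) β

lemma sfun_maps_Phi (j : Fin d.r) {β : V} (hβ : β ∈ d.Φ) : sfun d j β ∈ d.Φ := by
  rw [sfun_apply]
  exact d.hrefl _ (delta_mem_Phi d j) β hβ

lemma sfun_delta_self (j : Fin d.r) : sfun d j (d.Δ j) = -(d.Δ j) :=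
  Submodule.reflection_orthogonalComplement_singleton_eq_neg (d.Δ j)

lemma inner_fw_sfun {k j : Fin d.r} (hkj : k ≠ j) (β : V) :
    ⟪d.fw k, sfun d j β⟫ = ⟪d.fw k, β⟫ := by
  rw [sfun_apply, inner_sub_right, real_inner_smul_right, inner_fw_delta]
  simp [hkj]

lemma sfun_inv (j : Fin d.r) : (sfun d j)⁻¹ = sfun d j := by
  apply LinearIsometryEquiv.ext
  intro v
  rw [LinearIsometryEquiv.coe_inv]
  show (srefl V (d.Δ j)).symm v = _
  rw [show (srefl V (d.Δ j)).symm = srefl V (d.Δ j) from Submodule.reflection_symm (K := _)]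
  rfl

lemma sfun_sq (j : Fin d.r) (v : V) : sfun d j (sfun d j v) = v :=
  Submodule.reflection_reflection _ v

lemma sfun_pos {j : Fin d.r} {β : V} (hβ : β ∈ d.Pos) (hne : β ≠ d.Δ j) :
    sfun d j β ∈ d.Pos := by
  have hβΦ : β ∈ d.Φ := d.hPosSub hβ
  have hmem : sfun d j β ∈ d.Φ := sfun_maps_Phi d j hβΦ
  by_cases hex : ∃ k, k ≠ j ∧ 0 < ⟪d.fw k, β⟫
  · obtain ⟨k, hkj, hk⟩ := hex
    apply mem_Pos_of_inner_fw_pos d hmem (k := k)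
    rwa [inner_fw_sfun d hkj]
  · exfalso
    push_neg at hex
    obtain ⟨c, hc⟩ := d.hPosComb β hβ
    have hck : ∀ k, k ≠ j → (c k : ℝ) = 0 := by
      intro k hk
      have h1 := hex k hk
      have h2 := inner_fw_nonneg d hβ k
      have h3 : ⟪d.fw k, β⟫ = 0 := le_antisymm h1 h2
      rw [hc, inner_fw_comb] at h3
      have h4 := inner_delta_pos d k
      rcases mul_eq_zero.1 h3 with h5 | h5
      · exact h5
      · exfalso; rw [div_eq_zero_iff] at h5; rcases h5 with h5 | h5 <;> linarith
    have hβj : β = (c j : ℝ) • d.Δ j := by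
      rw [hc, Finset.sum_eq_single j]
      · intro b _ hb; rw [hck b hb, zero_smul]
      · simp
    have := d.hreduced (d.Δ j) (delta_mem_Phi d j) (c j : ℝ) (by rw [← hβj]; exact_mod_cast hβΦ)
    rcases this with h1 | h1
    · exact hne (by rw [hβj, h1, one_smul])
    · have : (0:ℝ) ≤ (c j : ℝ) := Nat.cast_nonneg _
      rw [h1] at this; linarith

lemma sfun_span {p j : Fin d.r} (hj : j ≠ p) {v : V}
    (hv : v ∈ Submodule.span ℝ (d.DeltaP p)) :
    sfun d j v ∈ Submodule.span ℝ (d.DeltaP p) := by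
  rw [sfun_apply]
  exact Submodule.sub_mem _ hv
    (Submodule.smul_mem _ _ (Submodule.subset_span (delta_mem_DeltaP d hj)))

lemma srefl_conj (w : V ≃ₗᵢ[ℝ] V) (α : V) (hα : α ≠ 0) :
    srefl V (w α) = w * srefl V α * w⁻¹ := by
  have hwα : w α ≠ 0 := fun h => hα (by simpa using congrArg w.symm h)
  apply LinearIsometryEquiv.ext
  intro v
  rw [LinearIsometryEquiv.coe_mul, LinearIsometryEquiv.coe_mul, Function.comp_apply,
    Function.comp_apply, LinearIsometryEquiv.coe_inv]
  rw [srefl_apply' _ hwα, srefl_apply' _ hα]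
  rw [map_sub, map_smul]
  rw [w.apply_symm_apply]
  congr 2
  have hco : coroot V (w α) = w (coroot V α) := by
    rw [coroot, coroot, map_smul, w.inner_map_map]
  rw [hco, ← w.inner_map_map (w.symm v) (coroot V α), w.apply_symm_apply]

end WengAux

namespace WengAux

variable {V : Type} [NormedAddCommGroup V] [InnerProductSpace ℝ V] [FiniteDimensional ℝ V]
variable (d : RootSystemData V)

lemma sfun_mem_W (j : Fin d.r) : sfun d j ∈ d.W :=
  Subgroup.subset_closure ⟨j, rfl⟩

lemma sfun_mem_Wp {p j : Fin d.r} (hj : j ≠ p) : sfun d j ∈ d.Wp p :=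
  Subgroup.subset_closure ⟨j, hj, rfl⟩

lemma Wp_le_W (p : Fin d.r) : d.Wp p ≤ d.W :=
  Subgroup.closure_mono (by rintro x ⟨j, _, rfl⟩; exact ⟨j, rfl⟩)

lemma mul_apply (w u : V ≃ₗᵢ[ℝ] V) (v : V) : (w * u) v = w (u v) := rfl

lemma sfun_mul_self (j : Fin d.r) : sfun d j * sfun d j = 1 := by
  apply LinearIsometryEquiv.ext
  intro v
  rw [mul_apply]
  exact sfun_sq d j v

lemma W_maps_Phi {w : V ≃ₗᵢ[ℝ] V} (hw : w ∈ d.W) :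
    (∀ α ∈ d.Φ, w α ∈ d.Φ) ∧ (∀ α ∈ d.Φ, w⁻¹ α ∈ d.Φ) := by
  induction hw using Subgroup.closure_induction with
  | mem x hx =>
    obtain ⟨j, rfl⟩ := hx
    simp only [show (fun j => srefl V (d.Δ j)) = sfun d from rfl, show srefl V (d.Δ j) = sfun d j from rfl]
    refine ⟨fun α hα => sfun_maps_Phi d j hα, fun α hα => ?_⟩
    rw [sfun_inv]
    exact sfun_maps_Phi d j hα
  | one => simp
  | mul x y hx hy ihx ihy =>
    refine ⟨fun α hα => ?_, fun α hα => ?_⟩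
    · rw [mul_apply]; exact ihx.1 _ (ihy.1 _ hα)
    · rw [mul_inv_rev, mul_apply]; exact ihy.2 _ (ihx.2 _ hα)
  | inv x hx ihx =>
    refine ⟨ihx.2, fun α hα => ?_⟩
    rw [inv_inv]; exact ihx.1 _ hα

lemma Wp_stable (p : Fin d.r) {w : V ≃ₗᵢ[ℝ] V} (hw : w ∈ d.Wp p) :
    ((∀ α ∈ d.Φ, w α ∈ d.Φ) ∧ (∀ v ∈ Submodule.span ℝ (d.DeltaP p), w v ∈ Submodule.span ℝ (d.DeltaP p)) ∧
      (∀ α, 0 < ⟪d.fw p, α⟫ → 0 < ⟪d.fw p, w α⟫)) ∧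
    ((∀ α ∈ d.Φ, w⁻¹ α ∈ d.Φ) ∧ (∀ v ∈ Submodule.span ℝ (d.DeltaP p), w⁻¹ v ∈ Submodule.span ℝ (d.DeltaP p)) ∧
      (∀ α, 0 < ⟪d.fw p, α⟫ → 0 < ⟪d.fw p, w⁻¹ α⟫)) := by
  induction hw using Subgroup.closure_induction with
  | mem x hx =>
    obtain ⟨j, hj, rfl⟩ := hx
    simp only [show (fun j => srefl V (d.Δ j)) = sfun d from rfl, show srefl V (d.Δ j) = sfun d j from rfl]
    have base : (∀ α ∈ d.Φ, sfun d j α ∈ d.Φ) ∧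
        (∀ v ∈ Submodule.span ℝ (d.DeltaP p), sfun d j v ∈ Submodule.span ℝ (d.DeltaP p)) ∧
        (∀ α, 0 < ⟪d.fw p, α⟫ → 0 < ⟪d.fw p, sfun d j α⟫) := by
      refine ⟨fun α hα => sfun_maps_Phi d j hα, fun v hv => sfun_span d hj hv, fun α hα => ?_⟩
      rwa [inner_fw_sfun d (Ne.symm hj)]
    refine ⟨base, ?_⟩
    rw [sfun_inv]
    exact base
  | one => simp
  | mul x y hx hy ihx ihy =>
    obtain ⟨⟨hx1, hx2, hx3⟩, hxI⟩ := ihx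
    obtain ⟨⟨hy1, hy2, hy3⟩, hyI⟩ := ihy
    obtain ⟨hx1', hx2', hx3'⟩ := hxI
    obtain ⟨hy1', hy2', hy3'⟩ := hyI
    constructor
    · exact ⟨fun α hα => by rw [mul_apply]; exact hx1 _ (hy1 _ hα),
        fun v hv => by rw [mul_apply]; exact hx2 _ (hy2 _ hv),
        fun α hα => by rw [mul_apply]; exact hx3 _ (hy3 _ hα)⟩
    · rw [mul_inv_rev]
      exact ⟨fun α hα => by rw [mul_apply]; exact hy1' _ (hx1' _ hα),
        fun v hv => by rw [mul_apply]; exact hy2' _ (hx2' _ hv),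
        fun α hα => by rw [mul_apply]; exact hy3' _ (hx3' _ hα)⟩
  | inv x hx ihx =>
    refine ⟨ihx.2, ?_⟩
    rw [inv_inv]
    exact ihx.1

/-- product of simple reflections indexed by a list -/
def wordProd (l : List (Fin d.r)) : V ≃ₗᵢ[ℝ] V := (l.map (sfun d)).prod

lemma wordProd_nil : wordProd d ([] : List (Fin d.r)) = 1 := rfl

lemma wordProd_cons (i : Fin d.r) (l : List (Fin d.r)) :
    wordProd d (i :: l) = sfun d i * wordProd d l := by
  simp [wordProd]

lemma wordProd_concat (l : List (Fin d.r)) (j : Fin d.r) :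
    wordProd d (l ++ [j]) = wordProd d l * sfun d j := by
  simp [wordProd]

lemma wordProd_mem_W (l : List (Fin d.r)) : wordProd d l ∈ d.W := by
  apply list_prod_mem
  intro x hx
  obtain ⟨j, _, rfl⟩ := List.mem_map.1 hx
  exact sfun_mem_W d j

lemma wordProd_reverse (l : List (Fin d.r)) :
    (wordProd d l)⁻¹ = wordProd d l.reverse := by
  induction l with
  | nil => simp [wordProd_nil]
  | cons i t ih =>
    rw [wordProd_cons, mul_inv_rev, ih, List.reverse_cons, wordProd_concat, sfun_inv]

lemma exists_word {w : V ≃ₗᵢ[ℝ] V} (hw : w ∈ d.W) : ∃ l, w = wordProd d l := by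
  induction hw using Subgroup.closure_induction with
  | mem x hx =>
    obtain ⟨j, rfl⟩ := hx
    simp only [show (fun j => srefl V (d.Δ j)) = sfun d from rfl, show srefl V (d.Δ j) = sfun d j from rfl]
    exact ⟨[j], by rw [wordProd_cons, wordProd_nil, mul_one]⟩
  | one => exact ⟨[], rfl⟩
  | mul x y hx hy ihx ihy =>
    obtain ⟨lx, rfl⟩ := ihx
    obtain ⟨ly, rfl⟩ := ihy
    exact ⟨lx ++ ly, by simp [wordProd, List.map_append]⟩
  | inv x hx ihx =>
    obtain ⟨l, rfl⟩ := ihx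
    exact ⟨l.reverse, wordProd_reverse d l⟩

lemma deletion (j : Fin d.r) :
    ∀ l : List (Fin d.r), wordProd d l (d.Δ j) ∈ d.NegS →
      ∃ l', wordProd d l * sfun d j = wordProd d l' ∧ l'.length + 1 = l.length := by
  intro l
  induction l with
  | nil =>
    intro h
    rw [wordProd_nil] at h
    exact absurd h (not_mem_NegS_of_Pos d (d.hΔPos j))
  | cons i t ih =>
    intro h
    rw [wordProd_cons, mul_apply] at h
    have hu : wordProd d t (d.Δ j) ∈ d.Φ :=
      (W_maps_Phi d (wordProd_mem_W d t)).1 _ (delta_mem_Phi d j)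
    rcases pos_or_neg d hu with hpos | hneg
    · have heq : wordProd d t (d.Δ j) = d.Δ i := by
        by_contra hne
        exact not_mem_NegS_of_Pos d (sfun_pos d hpos hne) h
      have hconj : sfun d i = wordProd d t * sfun d j * (wordProd d t)⁻¹ := by
        have hc := srefl_conj (wordProd d t) (d.Δ j) (delta_ne_zero d j)
        rw [heq] at hc
        exact hc
      refine ⟨t, ?_, rfl⟩
      have h6 : wordProd d t * sfun d j * (wordProd d t)⁻¹ * wordProd d t * sfun d j
          = wordProd d t * (sfun d j * sfun d j) := by group
      rw [wordProd_cons, hconj, h6, sfun_mul_self, mul_one]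
    · obtain ⟨t', ht', hlen⟩ := ih hneg
      refine ⟨i :: t', ?_, by simp [← hlen]⟩
      rw [wordProd_cons, mul_assoc, ht', wordProd_cons]

lemma wordProd_eq_one : ∀ (k : ℕ) (l : List (Fin d.r)), l.length ≤ k →
    (∀ β ∈ d.Pos, wordProd d l β ∈ d.Pos) → wordProd d l = 1 := by
  intro k
  induction k with
  | zero =>
    intro l hl _
    rw [List.length_eq_zero_iff.1 (Nat.le_zero.1 hl)]
    rfl
  | succ k ih =>
    intro l hl hpos
    rcases List.eq_nil_or_concat l with rfl | ⟨t, j, rfl⟩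
    · rfl
    · simp only [List.concat_eq_append] at hl hpos ⊢
      have hw : wordProd d (t ++ [j]) = wordProd d t * sfun d j := wordProd_concat d t j
      have h1 : wordProd d (t ++ [j]) (d.Δ j) ∈ d.Pos := hpos _ (d.hΔPos j)
      have h2 : wordProd d t (d.Δ j) ∈ d.NegS := by
        rw [mem_NegS]
        have he : wordProd d (t ++ [j]) (d.Δ j) = -(wordProd d t (d.Δ j)) := by
          rw [hw, mul_apply, sfun_delta_self, map_neg]
        rwa [he] at h1
      obtain ⟨t', ht', hlen⟩ := deletion d j t h2
      have heq : wordProd d (t ++ [j]) = wordProd d t' := by rw [hw, ht']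
      rw [heq]
      apply ih t'
      · have : t.length + 1 ≤ k + 1 := by simpa using hl
        omega
      · intro β hβ
        rw [← heq]
        exact hpos β hβ

lemma eq_one_of_maps_pos {w : V ≃ₗᵢ[ℝ] V} (hw : w ∈ d.W)
    (h : ∀ β ∈ d.Pos, w β ∈ d.Pos) : w = 1 := by
  obtain ⟨l, rfl⟩ := exists_word d hw
  exact wordProd_eq_one d l.length l le_rfl h

end WengAux

namespace WengAux

variable {V : Type} [NormedAddCommGroup V] [InnerProductSpace ℝ V] [FiniteDimensional ℝ V]
variable (d : RootSystemData V)

lemma pos_add_smul_pos {γ δ : V} (hγ : γ ∈ d.Pos) (hδ : δ ∈ d.Pos) {t : ℝ} (ht : 0 ≤ t)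
    (hmem : γ + t • δ ∈ d.Φ) : γ + t • δ ∈ d.Pos := by
  rcases pos_or_neg d hmem with h | h
  · exact h
  · exfalso
    have hneg : -(γ + t • δ) ∈ d.Pos := (mem_NegS d).1 h
    apply not_all_fw_zero d hneg
    intro k
    have h1 := inner_fw_nonneg d hneg k
    have h2 := inner_fw_nonneg d hγ k
    have h3 := inner_fw_nonneg d hδ k
    rw [inner_neg_right, inner_add_right, real_inner_smul_right] at h1 ⊢
    nlinarith

/-- a height function -/
def Hfun (v : V) : ℝ := ∑ k, ⟪d.fw k, v⟫ * (2 / ⟪d.Δ k, d.Δ k⟫)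

lemma Hfun_comb (c : Fin d.r → ℕ) : Hfun d (∑ j, (c j : ℝ) • d.Δ j) = ∑ j, (c j : ℝ) := by
  unfold Hfun
  apply Finset.sum_congr rfl
  intro k _
  rw [inner_fw_comb]
  have h := inner_delta_pos d k
  field_simp

lemma Hfun_sub_smul (v : V) (t : ℝ) (j : Fin d.r) :
    Hfun d (v - t • d.Δ j) = Hfun d v - t := by
  unfold Hfun
  have hterm : ∀ k : Fin d.r, ⟪d.fw k, v - t • d.Δ j⟫ * (2 / ⟪d.Δ k, d.Δ k⟫)
      = ⟪d.fw k, v⟫ * (2 / ⟪d.Δ k, d.Δ k⟫) - (if k = j then t else 0) := by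
    intro k
    rw [inner_sub_right, real_inner_smul_right, inner_fw_delta]
    have h := inner_delta_pos d k
    split_ifs with hkj
    · subst hkj
      field_simp
    · simp
  simp only [hterm]
  rw [Finset.sum_sub_distrib]
  congr 1
  simp

lemma maps_pos_of_maps_delta (w : V ≃ₗᵢ[ℝ] V) (hwΦ : ∀ α ∈ d.Φ, w α ∈ d.Φ)
    (hΔ : ∀ j, w (d.Δ j) ∈ d.Pos) : ∀ β ∈ d.Pos, w β ∈ d.Pos := by
  suffices h : ∀ (N : ℕ) (β : V), β ∈ d.Pos → ∀ c : Fin d.r → ℕ,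
      β = ∑ j, (c j : ℝ) • d.Δ j → (∑ j, c j) ≤ N → w β ∈ d.Pos by
    intro β hβ
    obtain ⟨c, hc⟩ := d.hPosComb β hβ
    exact h (∑ j, c j) β hβ c hc le_rfl
  intro N
  induction N with
  | zero =>
    intro β hβ c hc hN
    exfalso
    have hc0 : ∀ j, c j = 0 := by
      intro j
      have h0 : (∑ j, c j) = 0 := Nat.le_zero.1 hN
      exact (Finset.sum_eq_zero_iff.1 h0) j (Finset.mem_univ j)
    have hβ0 : β = 0 := by
      rw [hc]
      apply Finset.sum_eq_zero
      intro j _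
      rw [hc0 j]
      simp
    exact d.hzero (hβ0 ▸ d.hPosSub hβ)
  | succ N ih =>
    intro β hβ c hc hN
    have hββ : 0 < ⟪β, β⟫ := by
      have hβ0 : β ≠ 0 := fun h0 => d.hzero (h0 ▸ d.hPosSub hβ)
      have h : 0 < ‖β‖ := norm_pos_iff.2 hβ0
      rw [real_inner_self_eq_norm_sq]
      positivity
    have hsum : ⟪β, β⟫ = ∑ j, (c j : ℝ) * ⟪d.Δ j, β⟫ := by
      nth_rewrite 1 [hc]
      rw [sum_inner]
      exact Finset.sum_congr rfl fun k _ => real_inner_smul_left _ _ _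
    obtain ⟨j, hcj, hj⟩ : ∃ j, 0 < c j ∧ 0 < ⟪d.Δ j, β⟫ := by
      by_contra hno
      push_neg at hno
      have hle : ∀ k ∈ Finset.univ, (c k : ℝ) * ⟪d.Δ k, β⟫ ≤ 0 := by
        intro k _
        rcases Nat.eq_zero_or_pos (c k) with h0 | h0
        · rw [h0]; simp
        · have := hno k h0
          have hck : (0:ℝ) ≤ (c k : ℝ) := Nat.cast_nonneg _
          nlinarith
      have := Finset.sum_nonpos hle
      rw [← hsum] at this
      linarith
    by_cases hne : β = d.Δ j
    · rw [hne]; exact hΔ j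
    · obtain ⟨n, hn⟩ := d.hcrys _ (delta_mem_Phi d j) _ (d.hPosSub hβ)
      have hzpos : 0 < ⟪β, coroot V (d.Δ j)⟫ := by
        rw [inner_coroot]
        have h1 := inner_delta_pos d j
        have h2 : ⟪β, d.Δ j⟫ = ⟪d.Δ j, β⟫ := real_inner_comm _ _
        rw [h2]
        positivity
      have hn1 : 1 ≤ n := by
        have : (0:ℝ) < (n:ℝ) := hn ▸ hzpos
        exact_mod_cast this
      have hβ'pos : β - ⟪β, coroot V (d.Δ j)⟫ • d.Δ j ∈ d.Pos := by
        rw [← sfun_apply]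
        exact sfun_pos d hβ hne
      obtain ⟨c', hc'⟩ := d.hPosComb _ hβ'pos
      have hH : (∑ k, (c' k : ℝ)) = (∑ k, (c k : ℝ)) - (n : ℝ) := by
        have h1 : Hfun d (β - ⟪β, coroot V (d.Δ j)⟫ • d.Δ j) = Hfun d β - ⟪β, coroot V (d.Δ j)⟫ :=
          Hfun_sub_smul d β _ j
        rw [hc', Hfun_comb] at h1
        rw [h1, hn, hc, Hfun_comb]
      have hcN : (∑ k, c' k) ≤ N := by
        have hz : ((∑ k, c' k : ℕ) : ℝ) = ((∑ k, c k : ℕ) : ℝ) - (n : ℝ) := by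
          push_cast
          exact hH
        have hzz : ((∑ k, c' k : ℕ) : ℤ) = ((∑ k, c k : ℕ) : ℤ) - n := by
          exact_mod_cast hz
        have hNN : (∑ k, c k) ≤ N + 1 := hN
        omega
      have hw' := ih _ hβ'pos c' hc' hcN
      have hwd := hΔ j
      have hsplit : w β = w (β - ⟪β, coroot V (d.Δ j)⟫ • d.Δ j) + ⟪β, coroot V (d.Δ j)⟫ • w (d.Δ j) := by
        conv_lhs => rw [show β = (β - ⟪β, coroot V (d.Δ j)⟫ • d.Δ j) + ⟪β, coroot V (d.Δ j)⟫ • d.Δ j by abel]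
        rw [map_add, map_smul]
    
      rw [hsplit]
      exact pos_add_smul_pos d hw' hwd (le_of_lt hzpos)
        (by rw [← hsplit]; exact hwΦ _ (d.hPosSub hβ))

end WengAux

namespace WengAux

variable {V : Type} [NormedAddCommGroup V] [InnerProductSpace ℝ V] [FiniteDimensional ℝ V]
variable (d : RootSystemData V)

lemma m_decrease (p : Fin d.r) {j : Fin d.r} (hj : j ≠ p) (w : V ≃ₗᵢ[ℝ] V)
    (hNeg : w (d.Δ j) ∈ d.NegS) :
    ((d.PhiPpos p).filter (fun β => (w * sfun d j) β ∈ d.NegS)).card + 1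
      = ((d.PhiPpos p).filter (fun β => w β ∈ d.NegS)).card := by
  have hΔB : d.Δ j ∈ (d.PhiPpos p).filter (fun β => w β ∈ d.NegS) :=
    Finset.mem_filter.2 ⟨(mem_PhiPpos d p).2 ⟨d.hΔPos j,
      Submodule.subset_span (delta_mem_DeltaP d hj)⟩, hNeg⟩
  have hcard : ((d.PhiPpos p).filter (fun β => (w * sfun d j) β ∈ d.NegS)).card
      = (((d.PhiPpos p).filter (fun β => w β ∈ d.NegS)).erase (d.Δ j)).card := by
    apply Finset.card_nbij' (fun β => sfun d j β) (fun β => sfun d j β)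
    · intro β hβ
      obtain ⟨hβp, hβn⟩ := Finset.mem_filter.1 hβ
      obtain ⟨hβpos, hβspan⟩ := (mem_PhiPpos d p).1 hβp
      rw [mul_apply] at hβn
      have hne : β ≠ d.Δ j := by
        rintro rfl
        rw [sfun_delta_self, map_neg] at hβn
        exact not_mem_NegS_of_Pos d ((mem_NegS d).1 hNeg) hβn
      have h1 : sfun d j β ∈ d.Pos := sfun_pos d hβpos hne
      have h2 : sfun d j β ∈ Submodule.span ℝ (d.DeltaP p) := sfun_span d hj hβspan
      have h3 : sfun d j β ≠ d.Δ j := by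
        intro h
        have hβval : β = -(d.Δ j) := by
          have := congrArg (sfun d j) h
          rwa [sfun_sq, sfun_delta_self] at this
        rcases d.hPosDec β (d.hPosSub hβpos) with ⟨_, hc2⟩ | ⟨hc1, _⟩
        · rw [hβval] at hc2
          simp only [neg_neg] at hc2
          exact hc2 (d.hΔPos j)
        · exact hc1 hβpos
      refine Finset.mem_erase.2 ⟨h3, Finset.mem_filter.2 ⟨(mem_PhiPpos d p).2 ⟨h1, h2⟩, ?_⟩⟩
      exact hβn
    · intro γ hγ
      obtain ⟨hne, hγf⟩ := Finset.mem_erase.1 hγ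
      obtain ⟨hγp, hγn⟩ := Finset.mem_filter.1 hγf
      obtain ⟨hγpos, hγspan⟩ := (mem_PhiPpos d p).1 hγp
      have h1 : sfun d j γ ∈ d.Pos := sfun_pos d hγpos hne
      have h2 : sfun d j γ ∈ Submodule.span ℝ (d.DeltaP p) := sfun_span d hj hγspan
      refine Finset.mem_filter.2 ⟨(mem_PhiPpos d p).2 ⟨h1, h2⟩, ?_⟩
      rw [mul_apply, sfun_sq]
      exact hγn
    · intro β _; exact sfun_sq d j β
    · intro γ _; exact sfun_sq d j γ
  rw [hcard]
  exact Finset.card_erase_add_one hΔB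

lemma mem_Wp_of_m_zero (p : Fin d.r) {w : V ≃ₗᵢ[ℝ] V} (hw : w ∈ d.W)
    (h : ∀ β ∈ d.Pos, 0 < ⟪d.fw p, β⟫ → w β ∈ d.Pos)
    (hm : ((d.PhiPpos p).filter (fun β => w β ∈ d.NegS)).card = 0) : w ∈ d.Wp p := by
  have h1 : ∀ β ∈ d.Pos, w β ∈ d.Pos := by
    intro β hβ
    rcases (inner_fw_nonneg d hβ p).lt_or_eq with hlt | heq
    · exact h β hβ hlt
    · have hspan : β ∈ Submodule.span ℝ (d.DeltaP p) :=
        mem_span_DeltaP_of_pos d p hβ heq.symm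
      have hmem : β ∈ (d.PhiPpos p) := (mem_PhiPpos d p).2 ⟨hβ, hspan⟩
      have hnot : w β ∉ d.NegS := by
        intro hcon
        have : β ∈ (d.PhiPpos p).filter (fun β => w β ∈ d.NegS) :=
          Finset.mem_filter.2 ⟨hmem, hcon⟩
        rw [Finset.card_eq_zero] at hm
        rw [hm] at this
        exact absurd this (Finset.notMem_empty β)
      rcases pos_or_neg d ((W_maps_Phi d hw).1 _ (d.hPosSub hβ)) with hp | hn
      · exact hp
      · exact absurd hn hnot
  have := eq_one_of_maps_pos d hw h1
  rw [this]
  exact one_mem _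

lemma mem_Wp_of_maps_T (p : Fin d.r) {w : V ≃ₗᵢ[ℝ] V} (hw : w ∈ d.W)
    (h : ∀ β ∈ d.Pos, 0 < ⟪d.fw p, β⟫ → w β ∈ d.Pos) : w ∈ d.Wp p := by
  suffices haux : ∀ (N : ℕ) (w : V ≃ₗᵢ[ℝ] V), w ∈ d.W →
      (∀ β ∈ d.Pos, 0 < ⟪d.fw p, β⟫ → w β ∈ d.Pos) →
      ((d.PhiPpos p).filter (fun β => w β ∈ d.NegS)).card ≤ N → w ∈ d.Wp p by
    exact haux _ w hw h le_rfl
  intro N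
  induction N with
  | zero =>
    intro w hw h hcard
    exact mem_Wp_of_m_zero d p hw h (Nat.le_zero.1 hcard)
  | succ N ih =>
    intro w hw h hcard
    by_cases hm : ((d.PhiPpos p).filter (fun β => w β ∈ d.NegS)).card = 0
    · exact mem_Wp_of_m_zero d p hw h hm
    · have hex : ∃ j, j ≠ p ∧ w (d.Δ j) ∈ d.NegS := by
        by_contra hno
        push_neg at hno
        have hΔall : ∀ j, w (d.Δ j) ∈ d.Pos := by
          intro j
          by_cases hjp : j = p
          · subst hjp
            apply h _ (d.hΔPos j)
            rw [inner_fw_delta, if_pos rfl]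
            have := inner_delta_pos d j
            linarith
          · have hn := hno j hjp
            rcases pos_or_neg d ((W_maps_Phi d hw).1 _ (delta_mem_Phi d j)) with hp | hneg
            · exact hp
            · exact absurd hneg hn
        have hall := maps_pos_of_maps_delta d w (W_maps_Phi d hw).1 hΔall
        obtain ⟨β, hβ⟩ := Finset.card_pos.1 (Nat.pos_of_ne_zero hm)
        obtain ⟨hβp, hβn⟩ := Finset.mem_filter.1 hβ
        exact not_mem_NegS_of_Pos d (hall β ((mem_PhiPpos d p).1 hβp).1) hβn
      obtain ⟨j, hjp, hjneg⟩ := hex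
      have hw' : w * sfun d j ∈ d.W := mul_mem hw (sfun_mem_W d j)
      have hhyp' : ∀ β ∈ d.Pos, 0 < ⟪d.fw p, β⟫ → (w * sfun d j) β ∈ d.Pos := by
        intro β hβ hfβ
        rw [mul_apply]
        have h1 : sfun d j β ∈ d.Φ := sfun_maps_Phi d j (d.hPosSub hβ)
        have h2 : 0 < ⟪d.fw p, sfun d j β⟫ := by
          rw [inner_fw_sfun d (Ne.symm hjp)]
          exact hfβ
        exact h _ (mem_Pos_of_inner_fw_pos d h1 h2) h2
      have hdec := m_decrease d p hjp w hjneg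
      have hcard' : ((d.PhiPpos p).filter (fun β => (w * sfun d j) β ∈ d.NegS)).card ≤ N := by
        omega
      have hmem := ih (w * sfun d j) hw' hhyp' hcard'
      have heq : w = (w * sfun d j) * sfun d j := by
        rw [mul_assoc, sfun_mul_self, mul_one]
      rw [heq]
      exact mul_mem hmem (sfun_mem_Wp d hjp)

end WengAux

namespace WengAux

variable {V : Type} [NormedAddCommGroup V] [InnerProductSpace ℝ V] [FiniteDimensional ℝ V]

lemma inv_apply_apply (w : V ≃ₗᵢ[ℝ] V) (v : V) : w⁻¹ (w v) = v := by
  rw [LinearIsometryEquiv.coe_inv]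
  exact w.symm_apply_apply v

lemma apply_inv_apply (w : V ≃ₗᵢ[ℝ] V) (v : V) : w (w⁻¹ v) = v := by
  rw [LinearIsometryEquiv.coe_inv]
  exact w.apply_symm_apply v

end WengAux

open WengAux

/-- The sets `{w ∈ 𝔚_p‡ : |(w⁻¹Δ) \ Φ_p| = 1}` and
`{w ∈ W_p : Δ_p ⊆ w⁻¹(Δ_p ∪ Φ_p⁻)}` coincide. -/
theorem weng_frakWdag_single_exit_eq_Wp_subset
    {V : Type} [NormedAddCommGroup V] [InnerProductSpace ℝ V] [FiniteDimensional ℝ V]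
    (d : RootSystemData V) (p : Fin d.r) :
    {w : V ≃ₗᵢ[ℝ] V | w ∈ d.frakWdag p ∧
        (d.Φ.filter (fun α => w α ∈ Set.range d.Δ ∧ α ∉ d.PhiP p)).card = 1} =
    {w : V ≃ₗᵢ[ℝ] V | w ∈ d.Wp p ∧ ∀ j : Fin d.r, j ≠ p →
        (w (d.Δ j) ∈ d.DeltaP p ∨ -(w (d.Δ j)) ∈ d.PhiPpos p)} := by
  ext w
  simp only [Set.mem_setOf_eq, RootSystemData.frakWdag, RootSystemData.frakW,
    Set.mem_sep_iff]
  constructor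
  · rintro ⟨⟨⟨hwW, hC⟩, hlp⟩, -⟩
    have hlp' : ∀ α ∈ d.Pos \ d.PhiPpos p, w α ∉ d.NegS := by
      intro α hα hcon
      rw [RootSystemData.lp, Finset.card_eq_zero] at hlp
      have hmem : α ∈ (d.Pos \ d.PhiPpos p).filter (fun α => w α ∈ d.NegS) :=
        Finset.mem_filter.2 ⟨hα, hcon⟩
      rw [hlp] at hmem
      exact absurd hmem (Finset.notMem_empty α)
    have hT : ∀ β ∈ d.Pos, 0 < ⟪d.fw p, β⟫ → w β ∈ d.Pos := by
      intro β hβ hfβ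
      have hns : β ∉ d.PhiPpos p := by
        intro hcon
        have h0 := inner_fw_p_of_mem_span d p ((mem_PhiPpos d p).1 hcon).2
        linarith
      have hnn := hlp' β (Finset.mem_sdiff.2 ⟨hβ, hns⟩)
      rcases pos_or_neg d ((W_maps_Phi d hwW).1 _ (d.hPosSub hβ)) with hp | hn
      · exact hp
      · exact absurd hn hnn
    have hWp : w ∈ d.Wp p := mem_Wp_of_maps_T d p hwW hT
    refine ⟨hWp, fun j hj => ?_⟩
    have hstab := Wp_stable d p hWp
    have hspan : w (d.Δ j) ∈ Submodule.span ℝ (d.DeltaP p) :=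
      hstab.1.2.1 _ (Submodule.subset_span (delta_mem_DeltaP d hj))
    rcases hC j hj with hr | hn
    · obtain ⟨k, hk⟩ := hr
      left
      have hkp : k ≠ p := by
        intro hkeq
        rw [hkeq] at hk
        have hsp2 : d.Δ p ∈ Submodule.span ℝ (d.DeltaP p) := by rw [hk]; exact hspan
        have h0 := inner_fw_p_of_mem_span d p hsp2
        rw [inner_fw_delta, if_pos rfl] at h0
        have hip := inner_delta_pos d p
        linarith
      exact ⟨k, hkp, hk⟩
    · right
      rw [mem_PhiPpos d p]
      exact ⟨(mem_NegS d).1 hn, Submodule.neg_mem _ hspan⟩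
  · rintro ⟨hWp, hcond⟩
    have hwW : w ∈ d.W := Wp_le_W d p hWp
    have hstab := Wp_stable d p hWp
    have hC : ∀ j : Fin d.r, j ≠ p → (w (d.Δ j) ∈ Set.range d.Δ ∨ w (d.Δ j) ∈ d.NegS) := by
      intro j hj
      rcases hcond j hj with h | h
      · obtain ⟨k, _, hk⟩ := h
        exact Or.inl ⟨k, hk⟩
      · exact Or.inr ((mem_NegS d).2 ((mem_PhiPpos d p).1 h).1)
    have hlp : d.lp p w = 0 := by
      rw [RootSystemData.lp, Finset.card_eq_zero, Finset.filter_eq_empty_iff]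
      intro α hα
      obtain ⟨hαpos, hαnot⟩ := Finset.mem_sdiff.1 hα
      have hfα : 0 < ⟪d.fw p, α⟫ := by
        rcases (inner_fw_nonneg d hαpos p).lt_or_eq with h | h
        · exact h
        · exact absurd ((mem_PhiPpos d p).2
            ⟨hαpos, mem_span_DeltaP_of_pos d p hαpos h.symm⟩) hαnot
      have h1 : 0 < ⟪d.fw p, w α⟫ := hstab.1.2.2 α hfα
      have h2 : w α ∈ d.Φ := hstab.1.1 _ (d.hPosSub hαpos)
      exact not_mem_NegS_of_Pos d (mem_Pos_of_inner_fw_pos d h2 h1)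
    have hcard : (d.Φ.filter (fun α => w α ∈ Set.range d.Δ ∧ α ∉ d.PhiP p)).card = 1 := by
      rw [Finset.card_eq_one]
      refine ⟨w⁻¹ (d.Δ p), ?_⟩
      ext α
      rw [Finset.mem_filter, Finset.mem_singleton]
      constructor
      · rintro ⟨hαΦ, ⟨k, hk⟩, hαP⟩
        have hkp : k = p := by
          by_contra hkp
          apply hαP
          rw [mem_PhiP d p]
          refine ⟨hαΦ, ?_⟩
          have hα' : α = w⁻¹ (d.Δ k) := by rw [hk, inv_apply_apply]
          rw [hα']
          exact hstab.2.2.1 _ (Submodule.subset_span (delta_mem_DeltaP d hkp))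
        subst hkp
        rw [hk, inv_apply_apply]
      · rintro rfl
        refine ⟨hstab.2.1 _ (delta_mem_Phi d p), ⟨p, ?_⟩, ?_⟩
        · rw [apply_inv_apply]
        · intro hcon
          have hsp := ((mem_PhiP d p).1 hcon).2
          have hmem := hstab.1.2.1 _ hsp
          rw [apply_inv_apply] at hmem
          have h0 := inner_fw_p_of_mem_span d p hmem
          rw [inner_fw_delta, if_pos rfl] at h0
          have hip := inner_delta_pos d p
          linarith
    exact ⟨⟨⟨hwW, hC⟩, hlp⟩, hcard⟩
end
end
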